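/- There exist constants δ₁, δ₃ > 0 such that the following holds for all positive integers n and d. If G is an (n,d,λ)-graph with d ≤ δ₃·n and λ/d ≤ δ₁, then G contains an induced path on at least n/(48d) vertices. -/

import Mathlib

open Finset

/-- The adjacency matrix of `G` over `ℝ` is Hermitian. -/
noncomputable def SimpleGraph.adjHermitian {n : ℕ} (G : SimpleGraph (Fin n)) :
    letI := Classical.decRel G.Adj
    ((G.adjMatrix ℝ).IsHermitian) := by
  letI := Classical.decRel G.Adj
  rw [Matrix.IsHermitian, Matrix.conjTranspose_eq_transpose_of_trivial]
  exact G.isSymm_adjMatrix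

/-- `G` is an `(n,d,λ)`-graph: a `d`-regular graph on `n` vertices all of whose
adjacency-matrix eigenvalues, except one eigenvalue equal to `d`, have absolute
value at most `lam`. -/
noncomputable def IsNDLGraph (n d : ℕ) (lam : ℝ) (G : SimpleGraph (Fin n)) : Prop :=
  letI := Classical.decRel G.Adj
  G.IsRegularOfDegree d ∧
    ∃ i₀ : Fin n, (G.adjHermitian.eigenvalues i₀ = d ∧
      ∀ i : Fin n, i ≠ i₀ → |G.adjHermitian.eigenvalues i| ≤ lam)

/-- `G` has an induced path on `k` vertices. -/
def HasInducedPath {V : Type*} (G : SimpleGraph V) (k : ℕ) : Prop :=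
  ∃ f : Fin k → V, Function.Injective f ∧
    ∀ i j : Fin k, G.Adj (f i) (f j) ↔ ((i : ℕ) + 1 = (j : ℕ) ∨ (j : ℕ) + 1 = (i : ℕ))

/-- `G` has an induced cycle of length `k`. -/
def HasInducedCycle {V : Type*} (G : SimpleGraph V) (k : ℕ) : Prop :=
  3 ≤ k ∧ ∃ f : ZMod k → V, Function.Injective f ∧
    ∀ i j : ZMod k, G.Adj (f i) (f j) ↔ (i - j = 1 ∨ j - i = 1)

section Spectral
variable {n d : ℕ} {lam : ℝ} {G : SimpleGraph (Fin n)} [DecidableRel G.Adj]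

private noncomputable def asE (v : Fin n → ℝ) : EuclideanSpace ℝ (Fin n) := WithLp.toLp 2 v

private noncomputable def Sform (G : SimpleGraph (Fin n)) [DecidableRel G.Adj] (v w : Fin n → ℝ) : ℝ :=
  ∑ i, v i * ((G.adjMatrix ℝ).mulVec w) i

private lemma Sform_eq_double (v w : Fin n → ℝ) :
    Sform G v w = ∑ i, ∑ j, (if G.Adj i j then v i * w j else 0) := by
  unfold Sform
  refine Finset.sum_congr rfl fun i _ => ?_
  rw [Matrix.mulVec, dotProduct, Finset.mul_sum]
  refine Finset.sum_congr rfl fun j _ => ?_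
  simp only [SimpleGraph.adjMatrix_apply]
  split <;> ring

private lemma Sform_symm (v w : Fin n → ℝ) : Sform G v w = Sform G w v := by
  rw [Sform_eq_double, Sform_eq_double, Finset.sum_comm]
  refine Finset.sum_congr rfl fun i _ => Finset.sum_congr rfl fun j _ => ?_
  by_cases h : G.Adj i j
  · rw [if_pos h, if_pos (G.adj_symm h)]; ring
  · rw [if_neg h, if_neg (fun h' => h (G.adj_symm h'))]


variable (hA : (G.adjMatrix ℝ).IsHermitian)

private noncomputable def cf (v : Fin n → ℝ) (j : Fin n) : ℝ :=
  hA.eigenvectorBasis.repr (asE v) j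

private noncomputable def bfun (j : Fin n) : Fin n → ℝ :=
  WithLp.equiv 2 _ (hA.eigenvectorBasis j)

private lemma cf_eq_sum (v : Fin n → ℝ) (j : Fin n) :
    cf hA v j = ∑ i, bfun hA j i * v i := by
  rw [cf, OrthonormalBasis.repr_apply_apply]
  rw [PiLp.inner_apply]
  simp [bfun, asE, Real.inner_apply, mul_comm]

private lemma sum_cf_smul (v : Fin n → ℝ) :
    ∑ j, cf hA v j • bfun hA j = v := by
  have h := hA.eigenvectorBasis.sum_repr (asE v)
  have := congrArg (WithLp.linearEquiv 2 ℝ (Fin n → ℝ)) h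
  rw [map_sum] at this
  simpa [bfun, cf, asE] using this

private lemma parseval (v w : Fin n → ℝ) :
    ∑ j, cf hA v j * cf hA w j = ∑ i, v i * w i := by
  have h := @LinearIsometryEquiv.inner_map_map ℝ _ _ _ _ _ _ _
    hA.eigenvectorBasis.repr (asE v) (asE w)
  rw [PiLp.inner_apply, PiLp.inner_apply] at h
  simpa [cf, asE, mul_comm] using h


private lemma mulVec_eq_sum (w : Fin n → ℝ) :
    (G.adjMatrix ℝ).mulVec w = ∑ j, (hA.eigenvalues j * cf hA w j) • bfun hA j := by
  conv_lhs => rw [← sum_cf_smul hA w]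
  have : (G.adjMatrix ℝ).mulVec (∑ j, cf hA w j • bfun hA j)
      = ∑ j, cf hA w j • (G.adjMatrix ℝ).mulVec (bfun hA j) := by
    rw [← Matrix.mulVecLin_apply, map_sum]
    simp [Matrix.mulVecLin_apply, Matrix.mulVec_smul]
  rw [this]
  refine Finset.sum_congr rfl fun j _ => ?_
  have hm := hA.mulVec_eigenvectorBasis j
  rw [show (G.adjMatrix ℝ).mulVec (bfun hA j) = hA.eigenvalues j • bfun hA j from hm,
    smul_smul, mul_comm]

private lemma Sform_eigen (v w : Fin n → ℝ) :
    Sform G v w = ∑ j, hA.eigenvalues j * (cf hA v j * cf hA w j) := by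
  unfold Sform
  rw [mulVec_eq_sum hA w]
  have : ∀ i, (∑ j, (hA.eigenvalues j * cf hA w j) • bfun hA j) i
      = ∑ j, (hA.eigenvalues j * cf hA w j) * bfun hA j i := by
    intro i; simp [Finset.sum_apply]
  simp_rw [this, Finset.mul_sum]
  rw [Finset.sum_comm]
  refine Finset.sum_congr rfl fun j _ => ?_
  rw [cf_eq_sum hA v, Finset.sum_mul, Finset.mul_sum]
  refine Finset.sum_congr rfl fun i _ => by ring


private lemma mulVec_const (hreg : G.IsRegularOfDegree d) :
    (G.adjMatrix ℝ).mulVec (fun _ => (1:ℝ)) = fun _ => (d:ℝ) := by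
  funext i
  rw [SimpleGraph.adjMatrix_mulVec_apply]
  simp [hreg i]

variable {i₀ : Fin n}

private lemma cf_const (hreg : G.IsRegularOfDegree d)
    (h₀ : hA.eigenvalues i₀ = d) (hoth : ∀ i, i ≠ i₀ → |hA.eigenvalues i| ≤ lam)
    (hlam : lam < d) :
    (∀ j, j ≠ i₀ → cf hA (fun _ => (1:ℝ)) j = 0) ∧
      (cf hA (fun _ => (1:ℝ)) i₀)^2 = n := by
  set u : Fin n → ℝ := fun _ => (1:ℝ) with hu
  have hSuu : Sform G u u = n * d := by
    unfold Sform
    rw [mulVec_const hreg]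
    simp [hu]
  have hP : ∑ j, cf hA u j * cf hA u j = n := by
    rw [parseval]; simp [hu]
  have hE : ∑ j, hA.eigenvalues j * (cf hA u j * cf hA u j) = n * d := by
    rw [← Sform_eigen hA u u, hSuu]
  -- split off i₀
  have hmem : i₀ ∈ (univ : Finset (Fin n)) := mem_univ _
  set t := ∑ j ∈ univ.erase i₀, cf hA u j * cf hA u j with ht
  have ht0 : 0 ≤ t := Finset.sum_nonneg fun j _ => mul_self_nonneg _
  have hPs : cf hA u i₀ * cf hA u i₀ + t = n := by
    rw [ht, Finset.add_sum_erase _ (fun j => cf hA u j * cf hA u j) hmem]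
    exact hP
  have hEs : (d:ℝ) * (cf hA u i₀ * cf hA u i₀)
      + ∑ j ∈ univ.erase i₀, hA.eigenvalues j * (cf hA u j * cf hA u j) = n * d := by
    rw [show (d:ℝ) = hA.eigenvalues i₀ from h₀.symm,
      Finset.add_sum_erase _ (fun j => hA.eigenvalues j * (cf hA u j * cf hA u j)) hmem]
    rw [hE, h₀]
  have hEb : ∑ j ∈ univ.erase i₀, hA.eigenvalues j * (cf hA u j * cf hA u j) ≤ lam * t := by
    rw [ht, Finset.mul_sum]
    refine Finset.sum_le_sum fun j hj => ?_
    have hj' : j ≠ i₀ := Finset.ne_of_mem_erase hj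
    have h1 : |hA.eigenvalues j| ≤ lam := hoth j hj'
    have h2 : 0 ≤ cf hA u j * cf hA u j := mul_self_nonneg _
    calc hA.eigenvalues j * (cf hA u j * cf hA u j)
        ≤ |hA.eigenvalues j| * (cf hA u j * cf hA u j) :=
          mul_le_mul_of_nonneg_right (le_abs_self _) h2
      _ ≤ lam * (cf hA u j * cf hA u j) := mul_le_mul_of_nonneg_right h1 h2
  have htz : t = 0 := by nlinarith [hPs, hEs, hEb, hlam, ht0]
  constructor
  · intro j hj
    have : cf hA u j * cf hA u j = 0 := by
      have hnn : ∀ k ∈ univ.erase i₀, 0 ≤ cf hA u k * cf hA u k :=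
        fun k _ => mul_self_nonneg _
      have := (Finset.sum_eq_zero_iff_of_nonneg hnn).1 (by rw [← ht, htz]) j
        (Finset.mem_erase.2 ⟨hj, mem_univ _⟩)
      exact this
    exact mul_self_eq_zero.1 this
  · have := hPs
    rw [htz] at this
    nlinarith [this]


private lemma cf_zero_of_sum_zero (hreg : G.IsRegularOfDegree d)
    (h₀ : hA.eigenvalues i₀ = d) (hoth : ∀ i, i ≠ i₀ → |hA.eigenvalues i| ≤ lam)
    (hlam : lam < d) (hn : 0 < n)
    (v : Fin n → ℝ) (hv : ∑ i, v i = 0) : cf hA v i₀ = 0 := by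
  obtain ⟨hz, hc⟩ := cf_const hA hreg h₀ hoth hlam
  set u : Fin n → ℝ := fun _ => (1:ℝ) with hu
  have hc0 : cf hA u i₀ ≠ 0 := by
    intro h
    rw [h] at hc
    have : (n:ℝ) = 0 := by nlinarith [hc]
    exact absurd this (by positivity)
  have hcollapse : cf hA u i₀ • bfun hA i₀ = u := by
    have h1 := sum_cf_smul hA u
    have h2 : ∑ j, cf hA u j • bfun hA j = cf hA u i₀ • bfun hA i₀ := by
      refine Finset.sum_eq_single i₀ (fun j _ hj => by rw [hz j hj, zero_smul])
        (fun h => absurd (mem_univ i₀) h)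
    rw [h2] at h1
    exact h1
  have hbconst : ∀ i, bfun hA i₀ i = 1 / cf hA u i₀ := by
    intro i
    have h3 := congrFun hcollapse i
    rw [Pi.smul_apply, smul_eq_mul] at h3
    have h2 : cf hA u i₀ * bfun hA i₀ i = 1 := h3
    rw [eq_div_iff hc0]
    linear_combination h2
  rw [cf_eq_sum hA v i₀]
  calc ∑ i, bfun hA i₀ i * v i = ∑ i, (1 / cf hA u i₀) * v i := by
        refine Finset.sum_congr rfl fun i _ => by rw [hbconst i]
    _ = (1 / cf hA u i₀) * ∑ i, v i := by rw [Finset.mul_sum]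
    _ = 0 := by rw [hv, mul_zero]

private lemma Sform_bound (hreg : G.IsRegularOfDegree d)
    (h₀ : hA.eigenvalues i₀ = d) (hoth : ∀ i, i ≠ i₀ → |hA.eigenvalues i| ≤ lam)
    (hlam : lam < d) (hn : 0 < n) (hlam0 : 0 ≤ lam)
    (v w : Fin n → ℝ) (hv : ∑ i, v i = 0) (_hw : ∑ i, w i = 0) :
    |Sform G v w| ≤ lam * (Real.sqrt (∑ i, v i * v i) * Real.sqrt (∑ i, w i * w i)) := by
  rw [Sform_eigen hA]
  have hv0 : cf hA v i₀ = 0 := cf_zero_of_sum_zero hA hreg h₀ hoth hlam hn v hv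
  calc |∑ j, hA.eigenvalues j * (cf hA v j * cf hA w j)|
      ≤ ∑ j, |hA.eigenvalues j * (cf hA v j * cf hA w j)| := Finset.abs_sum_le_sum_abs _ _
    _ ≤ ∑ j, lam * (|cf hA v j| * |cf hA w j|) := by
        refine Finset.sum_le_sum fun j _ => ?_
        rw [abs_mul, abs_mul]
        by_cases hj : j = i₀
        · subst hj
          rw [hv0]
          simp [mul_nonneg, hlam0]
        · exact mul_le_mul_of_nonneg_right (hoth j hj)
            (mul_nonneg (abs_nonneg _) (abs_nonneg _))
    _ = lam * ∑ j, |cf hA v j| * |cf hA w j| := by rw [Finset.mul_sum]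
    _ ≤ lam * (Real.sqrt (∑ i, v i * v i) * Real.sqrt (∑ i, w i * w i)) := by
        refine mul_le_mul_of_nonneg_left ?_ hlam0
        have hcs := Finset.sum_mul_sq_le_sq_mul_sq univ
          (fun j => |cf hA v j|) (fun j => |cf hA w j|)
        have h1 : ∑ j, |cf hA v j| ^ 2 = ∑ i, v i * v i := by
          rw [← parseval hA v v]
          exact Finset.sum_congr rfl fun j _ => by rw [sq_abs]; ring
        have h2 : ∑ j, |cf hA w j| ^ 2 = ∑ i, w i * w i := by
          rw [← parseval hA w w]
          exact Finset.sum_congr rfl fun j _ => by rw [sq_abs]; ring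
        rw [h1, h2] at hcs
        have hnn : (0:ℝ) ≤ ∑ j, |cf hA v j| * |cf hA w j| :=
          Finset.sum_nonneg fun j _ => mul_nonneg (abs_nonneg _) (abs_nonneg _)
        have hvv : (0:ℝ) ≤ ∑ i, v i * v i := Finset.sum_nonneg fun i _ => mul_self_nonneg _
        have hww : (0:ℝ) ≤ ∑ i, w i * w i := Finset.sum_nonneg fun i _ => mul_self_nonneg _
        nlinarith [Real.sq_sqrt hvv, Real.sq_sqrt hww,
          Real.sqrt_nonneg (∑ i, v i * v i), Real.sqrt_nonneg (∑ i, w i * w i),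
          mul_nonneg (Real.sqrt_nonneg (∑ i, v i * v i)) (Real.sqrt_nonneg (∑ i, w i * w i))]


private lemma indicator_sums (A : Finset (Fin n)) :
    (∑ i, ((if i ∈ A then (1:ℝ) else 0) - A.card / n)) = A.card - A.card / n * n ∧
    (∑ i, ((if i ∈ A then (1:ℝ) else 0) - A.card / n)
        * ((if i ∈ A then (1:ℝ) else 0) - A.card / n))
      = A.card - 2 * (A.card / n) * A.card + (A.card / n)^2 * n := by
  constructor
  · rw [Finset.sum_sub_distrib]
    simp [Finset.sum_ite_mem, Finset.card_univ]
    try ring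
  · have h : ∀ i : Fin n, ((if i ∈ A then (1:ℝ) else 0) - A.card / n)
        * ((if i ∈ A then (1:ℝ) else 0) - A.card / n)
        = (if i ∈ A then (1:ℝ) else 0) - 2 * (A.card / n) * (if i ∈ A then (1:ℝ) else 0)
          + (A.card / n)^2 := by
      intro i
      by_cases h : i ∈ A <;> simp [h] <;> ring
    rw [Finset.sum_congr rfl (fun i _ => h i)]
    rw [Finset.sum_add_distrib, Finset.sum_sub_distrib, ← Finset.mul_sum]
    simp [Finset.sum_ite_mem, Finset.card_univ]
    try ring

theorem key_mixing_bound (hA : (G.adjMatrix ℝ).IsHermitian) (i₀ : Fin n)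
    (h₀ : hA.eigenvalues i₀ = d) (hoth : ∀ i, i ≠ i₀ → |hA.eigenvalues i| ≤ lam)
    (hreg : G.IsRegularOfDegree d) (hd : 0 < d) (hn2 : 2 ≤ n)
    (hlam6 : lam ≤ d / 6)
    (A B : Finset (Fin n)) (hAB : ∀ a ∈ A, ∀ b ∈ B, ¬ G.Adj a b) :
    36 * (A.card * B.card) ≤ n ^ 2 := by
  have hn : 0 < n := lt_of_lt_of_le two_pos hn2
  have hnR : (0:ℝ) < n := by exact_mod_cast hn
  have hdR : (0:ℝ) < d := by exact_mod_cast hd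
  have hlam : lam < d := lt_of_le_of_lt hlam6 (by linarith)
  have hlam0 : 0 ≤ lam := by
    obtain ⟨j, hj⟩ := Fintype.exists_ne_of_one_lt_card
      (by rw [Fintype.card_fin]; omega) i₀
    exact le_trans (abs_nonneg _) (hoth j hj)
  set v : Fin n → ℝ := fun i => (if i ∈ A then (1:ℝ) else 0) - A.card / n with hvdef
  set w : Fin n → ℝ := fun i => (if i ∈ B then (1:ℝ) else 0) - B.card / n with hwdef
  obtain ⟨hv1, hv2⟩ := indicator_sums A
  obtain ⟨hw1, hw2⟩ := indicator_sums B
  have hv0 : ∑ i, v i = 0 := by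
    simp only [hvdef]
    rw [hv1]; field_simp; ring
  have hw0 : ∑ i, w i = 0 := by
    simp only [hwdef]
    rw [hw1]; field_simp; ring
  have hvsq : ∑ i, v i * v i = A.card - (A.card)^2 / n := by
    simp only [hvdef]
    rw [hv2]; field_simp; ring
  have hwsq : ∑ i, w i * w i = B.card - (B.card)^2 / n := by
    simp only [hwdef]
    rw [hw2]; field_simp; ring
  have hSuu : Sform G (fun _ => (1:ℝ)) (fun _ => (1:ℝ)) = n * d := by
    unfold Sform; rw [mulVec_const hreg]; simp
  have hS1u : ∀ C : Finset (Fin n),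
      Sform G (fun i => if i ∈ C then (1:ℝ) else 0) (fun _ => (1:ℝ)) = d * C.card := by
    intro C
    unfold Sform
    rw [mulVec_const hreg]
    rw [Finset.sum_congr rfl (fun i (_ : i ∈ univ) => by
      show (if i ∈ C then (1:ℝ) else 0) * d = (if i ∈ C then (d:ℝ) else 0)
      split <;> simp)]
    simp [Finset.sum_ite_mem, Finset.card_univ, mul_comm]
  have hSu1 : ∀ C : Finset (Fin n),
      Sform G (fun _ => (1:ℝ)) (fun i => if i ∈ C then (1:ℝ) else 0) = d * C.card := by
    intro C; rw [Sform_symm]; exact hS1u C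
  have hSAB : Sform G (fun i => if i ∈ A then (1:ℝ) else 0)
      (fun i => if i ∈ B then (1:ℝ) else 0) = 0 := by
    rw [Sform_eq_double]
    refine Finset.sum_eq_zero fun i _ => Finset.sum_eq_zero fun j _ => ?_
    by_cases h : G.Adj i j
    · rw [if_pos h]
      by_cases hiA : i ∈ A
      · have : ¬ j ∈ B := fun hjB => hAB i hiA j hjB h
        simp [this]
      · simp [hiA]
    · rw [if_neg h]
  have hbil : Sform G v w = - ((d:ℝ) * A.card * B.card / n) := by
    have hexp : Sform G v w
        = Sform G (fun i => if i ∈ A then (1:ℝ) else 0) (fun i => if i ∈ B then (1:ℝ) else 0)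
          - (B.card / n) * Sform G (fun i => if i ∈ A then (1:ℝ) else 0) (fun _ => (1:ℝ))
          - (A.card / n) * Sform G (fun _ => (1:ℝ)) (fun i => if i ∈ B then (1:ℝ) else 0)
          + (A.card / n) * (B.card / n) * Sform G (fun _ => (1:ℝ)) (fun _ => (1:ℝ)) := by
      simp only [Sform_eq_double, hvdef, hwdef, Finset.mul_sum,
        ← Finset.sum_sub_distrib, ← Finset.sum_add_distrib]
      refine Finset.sum_congr rfl fun i _ => Finset.sum_congr rfl fun j _ => ?_
      by_cases h : G.Adj i j
      · simp only [if_pos h]; ring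
      · simp only [if_neg h]; ring
    rw [hexp, hSAB, hS1u, hSu1, hSuu]
    field_simp
    ring
  have hmain := Sform_bound hA hreg h₀ hoth hlam hn hlam0 v w hv0 hw0
  rw [hbil, abs_neg] at hmain
  have hcardA : (0:ℝ) ≤ A.card := by positivity
  have hcardB : (0:ℝ) ≤ B.card := by positivity
  have hsq1 : Real.sqrt (∑ i, v i * v i) ≤ Real.sqrt A.card := by
    refine Real.sqrt_le_sqrt ?_
    rw [hvsq]
    have : (0:ℝ) ≤ (A.card)^2 / n := by positivity
    linarith
  have hsq2 : Real.sqrt (∑ i, w i * w i) ≤ Real.sqrt B.card := by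
    refine Real.sqrt_le_sqrt ?_
    rw [hwsq]
    have : (0:ℝ) ≤ (B.card)^2 / n := by positivity
    linarith
  have hfinal : (d:ℝ) * A.card * B.card / n
      ≤ (d/6) * (Real.sqrt A.card * Real.sqrt B.card) := by
    refine le_trans (le_trans (le_abs_self _) hmain) ?_
    have h1 : lam * (Real.sqrt (∑ i, v i * v i) * Real.sqrt (∑ i, w i * w i))
        ≤ lam * (Real.sqrt A.card * Real.sqrt B.card) := by
      refine mul_le_mul_of_nonneg_left ?_ hlam0
      exact mul_le_mul hsq1 hsq2 (Real.sqrt_nonneg _) (Real.sqrt_nonneg _)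
    refine le_trans h1 ?_
    refine mul_le_mul_of_nonneg_right hlam6 ?_
    exact mul_nonneg (Real.sqrt_nonneg _) (Real.sqrt_nonneg _)
  set s : ℝ := Real.sqrt ((A.card : ℝ) * B.card) with hs
  have hs0 : 0 ≤ s := Real.sqrt_nonneg _
  have hssq : s^2 = (A.card : ℝ) * B.card := Real.sq_sqrt (by positivity)
  have hsplit : s = Real.sqrt A.card * Real.sqrt B.card := by
    rw [hs]; exact Real.sqrt_mul hcardA _
  have h1 : (d:ℝ) * (s * s) ≤ (d/6) * s * n := by
    have h2 : (d:ℝ) * (s*s) / n ≤ (d/6) * s := by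
      calc (d:ℝ) * (s * s) / n = d * A.card * B.card / n := by
            rw [show s * s = s^2 by ring, hssq]; ring
        _ ≤ (d/6) * (Real.sqrt A.card * Real.sqrt B.card) := hfinal
        _ = (d/6) * s := by rw [hsplit]
    rw [div_le_iff₀ hnR] at h2
    exact h2
  have hsn : s ≤ n / 6 := by
    rcases eq_or_lt_of_le hs0 with h | hspos
    · rw [← h]; positivity
    · have hc : (0:ℝ) < d * s := mul_pos hdR hspos
      have h3 : (d * s) * s ≤ (d * s) * (n/6) := by
        ring_nf
        ring_nf at h1
        linarith
      exact le_of_mul_le_mul_left h3 hc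
  have hfin : (36:ℝ) * (A.card * B.card) ≤ n^2 := by
    calc (36:ℝ) * (A.card * B.card) = 36 * s^2 := by rw [hssq]
      _ ≤ 36 * ((n/6)^2) := by
          have := pow_le_pow_left₀ hs0 hsn 2
          linarith
      _ = n^2 := by ring
  exact_mod_cast hfin

end Spectral

section Comb
variable {n d : ℕ} (G : SimpleGraph (Fin n))

attribute [local instance] Classical.propDecidable

/-- vertices equal or adjacent to something in the list -/
noncomputable def cnbhd (l : List (Fin n)) : Finset (Fin n) :=
  univ.filter (fun x => ∃ v ∈ l, x = v ∨ G.Adj v x)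

/-- vertices neither equal nor adjacent to anything in the list -/
noncomputable def restOf (l : List (Fin n)) : Finset (Fin n) :=
  univ.filter (fun x => ∀ v ∈ l, x ≠ v ∧ ¬ G.Adj v x)

def stepR (R : Finset (Fin n)) (a b : Fin n) : Prop := G.Adj a b ∧ a ∈ R ∧ b ∈ R

def reachIn (R : Finset (Fin n)) (a b : Fin n) : Prop :=
  Relation.ReflTransGen (stepR G R) a b

noncomputable def compIn (R : Finset (Fin n)) (u : Fin n) : Finset (Fin n) :=
  univ.filter (reachIn G R u)

variable {G}

lemma mem_restOf {l : List (Fin n)} {x : Fin n} :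
    x ∈ restOf G l ↔ ∀ v ∈ l, x ≠ v ∧ ¬ G.Adj v x := by
  simp [restOf]

lemma mem_compIn {R : Finset (Fin n)} {u x : Fin n} :
    x ∈ compIn G R u ↔ reachIn G R u x := by
  simp [compIn]

lemma reachIn_symm {R : Finset (Fin n)} {a b : Fin n} (h : reachIn G R a b) :
    reachIn G R b a := by
  refine (@Relation.ReflTransGen.stdSymm _ (stepR G R) ⟨?_⟩).symm _ _ h
  intro x y hxy
  exact ⟨G.adj_symm hxy.1, hxy.2.2, hxy.2.1⟩

lemma reachIn_mono {R R' : Finset (Fin n)} (hsub : R ⊆ R') {a b : Fin n}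
    (h : reachIn G R a b) : reachIn G R' a b := by
  induction h with
  | refl => exact Relation.ReflTransGen.refl
  | tail _ hbc ih => exact Relation.ReflTransGen.tail ih ⟨hbc.1, hsub hbc.2.1, hsub hbc.2.2⟩

lemma mem_of_reachIn {R : Finset (Fin n)} {a b : Fin n} (ha : a ∈ R)
    (h : reachIn G R a b) : b ∈ R := by
  induction h with
  | refl => exact ha
  | tail _ hbc _ => exact hbc.2.2

lemma compIn_subset {R : Finset (Fin n)} {u : Fin n} (hu : u ∈ R) :
    compIn G R u ⊆ R := by
  intro x hx
  exact mem_of_reachIn hu (mem_compIn.1 hx)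

lemma mem_compIn_self {u : Fin n} {R : Finset (Fin n)} : u ∈ compIn G R u :=
  mem_compIn.2 Relation.ReflTransGen.refl

lemma compIn_eq_of_mem {R : Finset (Fin n)} {u v : Fin n}
    (h : v ∈ compIn G R u) : compIn G R v = compIn G R u := by
  have huv : reachIn G R u v := mem_compIn.1 h
  ext w
  rw [mem_compIn, mem_compIn]
  constructor
  · intro hvw; exact Relation.ReflTransGen.trans huv hvw
  · intro huw; exact Relation.ReflTransGen.trans (reachIn_symm huv) huw

lemma compIn_closed {R : Finset (Fin n)} {u a b : Fin n}
    (ha : a ∈ compIn G R u) (hadj : G.Adj a b) (haR : a ∈ R) (hbR : b ∈ R) :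
    b ∈ compIn G R u := by
  exact mem_compIn.2 (Relation.ReflTransGen.tail (mem_compIn.1 ha) ⟨hadj, haR, hbR⟩)

lemma reachIn_restrict {R R' : Finset (Fin n)} {u v : Fin n}
    (hR' : R' ⊆ R) (hsub : compIn G R u ⊆ R') (h : reachIn G R u v) :
    reachIn G R' u v := by
  induction h with
  | refl => exact Relation.ReflTransGen.refl
  | @tail b c hub hbc ih =>
      refine Relation.ReflTransGen.tail ih ⟨hbc.1, ?_, ?_⟩
      · exact hsub (mem_compIn.2 hub)
      · exact hsub (mem_compIn.2 (Relation.ReflTransGen.tail hub hbc))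

/-- extract a boundary edge along a reachability path -/
lemma reachIn_boundary {R : Finset (Fin n)} {u v : Fin n} {D : Finset (Fin n)}
    (h : reachIn G R u v) (hu : u ∈ D) (hv : v ∉ D) :
    ∃ y z, reachIn G R u y ∧ stepR G R y z ∧ y ∈ D ∧ z ∉ D := by
  induction h with
  | refl => exact absurd hu hv
  | @tail b c hub hbc ih =>
      by_cases hbD : b ∈ D
      · exact ⟨b, c, hub, hbc, hbD, hv⟩
      · exact ih hbD


lemma mem_cnbhd {l : List (Fin n)} {x : Fin n} :
    x ∈ cnbhd G l ↔ ∃ v ∈ l, x = v ∨ G.Adj v x := by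
  simp [cnbhd]

lemma restOf_eq_compl {l : List (Fin n)} : restOf G l = univ \ cnbhd G l := by
  ext x
  simp only [mem_restOf, Finset.mem_sdiff, Finset.mem_univ, true_and, mem_cnbhd]
  push_neg
  constructor
  · intro h v hv; exact h v hv
  · intro h v hv; exact h v hv

lemma card_cnbhd (hdeg : ∀ v : Fin n, (univ.filter (fun x => G.Adj v x)).card = d)
    (l : List (Fin n)) : (cnbhd G l).card ≤ l.length * (d + 1) := by
  induction l with
  | nil => simp [cnbhd]
  | cons a t ih =>
      have hsub : cnbhd G (a :: t) ⊆ insert a ((univ.filter (fun x => G.Adj a x)) ∪ cnbhd G t) := by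
        intro x hx
        rw [mem_cnbhd] at hx
        obtain ⟨v, hv, hx⟩ := hx
        rcases List.mem_cons.1 hv with rfl | hv
        · rcases hx with rfl | hx
          · exact Finset.mem_insert_self _ _
          · exact Finset.mem_insert_of_mem (Finset.mem_union_left _ (by simp [hx]))
        · exact Finset.mem_insert_of_mem (Finset.mem_union_right _ (mem_cnbhd.2 ⟨v, hv, hx⟩))
      calc (cnbhd G (a :: t)).card
          ≤ (insert a ((univ.filter (fun x => G.Adj a x)) ∪ cnbhd G t)).card :=
            Finset.card_le_card hsub
        _ ≤ ((univ.filter (fun x => G.Adj a x)) ∪ cnbhd G t).card + 1 :=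
            Finset.card_insert_le _ _
        _ ≤ ((univ.filter (fun x => G.Adj a x)).card + (cnbhd G t).card) + 1 := by
            exact Nat.add_le_add_right (Finset.card_union_le _ _) 1
        _ ≤ (d + t.length * (d + 1)) + 1 := by
            rw [hdeg a]
            exact Nat.add_le_add_right (Nat.add_le_add_left ih d) 1
        _ = (a :: t).length * (d + 1) := by simp [List.length_cons]; ring

lemma card_restOf (hdeg : ∀ v : Fin n, (univ.filter (fun x => G.Adj v x)).card = d)
    (l : List (Fin n)) : n ≤ (restOf G l).card + l.length * (d + 1) := by
  have h1 : (restOf G l).card = n - (cnbhd G l).card := by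
    rw [restOf_eq_compl, Finset.card_sdiff_of_subset (Finset.subset_univ _), Finset.card_univ,
      Fintype.card_fin]
  have h2 := card_cnbhd hdeg l
  have h3 : (cnbhd G l).card ≤ n := by
    calc (cnbhd G l).card ≤ (univ : Finset (Fin n)).card := Finset.card_le_card (Finset.subset_univ _)
      _ = n := by rw [Finset.card_univ, Fintype.card_fin]
  omega

/-- comp of a vertex outside a removed component is unchanged -/
lemma compIn_sdiff_eq {R : Finset (Fin n)} {u₀ u : Fin n} (hu : u ∈ R)
    (hnot : u ∉ compIn G R u₀) :
    compIn G (R \ compIn G R u₀) u = compIn G R u := by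
  apply Finset.Subset.antisymm
  · intro x hx
    exact mem_compIn.2 (reachIn_mono (Finset.sdiff_subset) (mem_compIn.1 hx))
  · intro x hx
    refine mem_compIn.2 (reachIn_restrict Finset.sdiff_subset ?_ (mem_compIn.1 hx))
    intro y hy
    rw [Finset.mem_sdiff]
    refine ⟨compIn_subset hu hy, fun hyC => ?_⟩
    have h1 : compIn G R y = compIn G R u₀ := compIn_eq_of_mem hyC
    have h2 : compIn G R y = compIn G R u := compIn_eq_of_mem hy
    exact hnot (by rw [← h1, h2]; exact mem_compIn_self)

/-- greedy grouping of components -/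
lemma split_lemma : ∀ (N : ℕ) (R : Finset (Fin n)) (_ : R.card ≤ N) (c m : ℕ),
    1 ≤ c → (∀ u ∈ R, (compIn G R u).card ≤ c) → m ≤ R.card →
    ∃ A : Finset (Fin n), A ⊆ R ∧ (∀ u ∈ A, compIn G R u ⊆ A) ∧ m ≤ A.card ∧ A.card < m + c := by
  intro N
  induction N with
  | zero =>
      intro R hR c m hc hcomp hm
      refine ⟨∅, Finset.empty_subset _, by simp, by omega, by
        simp; omega⟩
  | succ N ih =>
      intro R hR c m hc hcomp hm
      by_cases hm0 : m = 0
      · exact ⟨∅, Finset.empty_subset _, by simp, by omega, by simp; omega⟩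
      · have hmpos : 0 < m := Nat.pos_of_ne_zero hm0
        have hRpos : 0 < R.card := lt_of_lt_of_le hmpos hm
        obtain ⟨u, hu⟩ := Finset.card_pos.1 hRpos
        set Cu := compIn G R u with hCu
        have hCsub : Cu ⊆ R := compIn_subset hu
        have hCne : u ∈ Cu := mem_compIn_self
        have hCpos : 0 < Cu.card := Finset.card_pos.2 ⟨u, hCne⟩
        by_cases hbig : m ≤ Cu.card
        · refine ⟨Cu, hCsub, ?_, hbig, ?_⟩
          · intro w hw
            rw [hCu, compIn_eq_of_mem hw]
          · have h5 := hcomp u hu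
            rw [← hCu] at h5
            omega
        · -- recurse on R \ Cu
          push_neg at hbig
          set R' := R \ Cu with hR'
          have hcard' : R'.card = R.card - Cu.card := Finset.card_sdiff_of_subset hCsub
          have hR'le : R'.card ≤ N := by
            have : R.card ≤ N + 1 := hR
            omega
          have hcomp' : ∀ w ∈ R', (compIn G R' w).card ≤ c := by
            intro w hw
            refine le_trans (Finset.card_le_card ?_) (hcomp w (Finset.mem_sdiff.1 hw).1)
            intro x hx
            exact mem_compIn.2 (reachIn_mono Finset.sdiff_subset (mem_compIn.1 hx))
          have hm' : m - Cu.card ≤ R'.card := by omega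
          obtain ⟨A', hA'sub, hA'closed, hA'lo, hA'hi⟩ :=
            ih R' hR'le c (m - Cu.card) hc hcomp' hm'
          refine ⟨A' ∪ Cu, ?_, ?_, ?_, ?_⟩
          · exact Finset.union_subset (hA'sub.trans Finset.sdiff_subset) hCsub
          · intro w hw
            rcases Finset.mem_union.1 hw with hw | hw
            · have hwR' : w ∈ R' := hA'sub hw
              have heq : compIn G R' w = compIn G R w := by
                refine compIn_sdiff_eq (Finset.mem_sdiff.1 hwR').1 ?_
                exact (Finset.mem_sdiff.1 hwR').2
              intro x hx
              rw [← heq] at hx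
              exact Finset.mem_union_left _ (hA'closed w hw hx)
            · intro x hx
              rw [compIn_eq_of_mem hw] at hx
              exact Finset.mem_union_right _ hx
          · have hdisj : Disjoint A' Cu := by
              refine Finset.disjoint_left.2 fun x hxA hxC => ?_
              exact absurd hxC (Finset.mem_sdiff.1 (hA'sub hxA)).2
            rw [Finset.card_union_of_disjoint hdisj]
            omega
          · have hdisj : Disjoint A' Cu := by
              refine Finset.disjoint_left.2 fun x hxA hxC => ?_
              exact absurd hxC (Finset.mem_sdiff.1 (hA'sub hxA)).2
            rw [Finset.card_union_of_disjoint hdisj]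
            omega


/-- induced path as a list (head = current endpoint) -/
def IndList (G : SimpleGraph (Fin n)) (l : List (Fin n)) : Prop :=
  l.Nodup ∧ ∀ (i j : ℕ) (hi : i < l.length) (hj : j < l.length),
    G.Adj l[i] l[j] ↔ (i + 1 = j ∨ j + 1 = i)

lemma IndList.nil : IndList G [] := by
  constructor
  · exact List.nodup_nil
  · intro i j hi hj
    simp at hi

lemma IndList.single (a : Fin n) : IndList G [a] := by
  constructor
  · simp
  · intro i j hi hj
    simp only [List.length_singleton] at hi hj
    interval_cases i
    interval_cases j
    simp [G.irrefl]

lemma IndList.cons {a z : Fin n} {t : List (Fin n)} (h : IndList G (a :: t))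
    (hadj : G.Adj z a) (hnotmem : z ∉ a :: t) (hnon : ∀ v ∈ t, ¬ G.Adj z v) :
    IndList G (z :: a :: t) := by
  obtain ⟨hnd, hiff⟩ := h
  constructor
  · exact List.nodup_cons.2 ⟨hnotmem, hnd⟩
  · intro i j hi hj
    match i, j with
    | 0, 0 => simp [G.irrefl]
    | 0, (j + 1) =>
        rw [List.getElem_cons_zero, List.getElem_cons_succ]
        match j, hj with
        | 0, _ =>
            simp only [List.getElem_cons_zero]
            simp [hadj]
        | (j + 1), hj =>
            have hj' : j < t.length := by
              simp only [List.length_cons] at hj; omega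
            rw [List.getElem_cons_succ]
            have hmem : t[j] ∈ t := List.getElem_mem _
            have : ¬ G.Adj z t[j] := hnon _ hmem
            simp only [this, false_iff]
            omega
    | (i + 1), 0 =>
        rw [List.getElem_cons_zero, List.getElem_cons_succ]
        rw [G.adj_comm]
        match i, hi with
        | 0, _ =>
            simp only [List.getElem_cons_zero]
            simp [hadj]
        | (i + 1), hi =>
            have hi' : i < t.length := by
              simp only [List.length_cons] at hi; omega
            rw [List.getElem_cons_succ]
            have hmem : t[i] ∈ t := List.getElem_mem _
            have : ¬ G.Adj z t[i] := hnon _ hmem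
            simp only [this, false_iff]
            omega
    | (i + 1), (j + 1) =>
        rw [List.getElem_cons_succ, List.getElem_cons_succ]
        rw [hiff i j (by simpa using hi) (by simpa using hj)]
        omega

lemma IndList.hasInducedPath {l : List (Fin n)} (h : IndList G l) :
    HasInducedPath G l.length := by
  obtain ⟨hnd, hiff⟩ := h
  refine ⟨fun i => l.get ⟨i, i.isLt⟩, ?_, ?_⟩
  · intro i j hij
    have hinj := List.nodup_iff_injective_get.1 hnd
    have := hinj hij
    exact Fin.ext (congrArg Fin.val this)
  · intro i j
    have := hiff i j i.isLt j.isLt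
    simpa [List.get_eq_getElem] using this


lemma restOf_nil : restOf G ([] : List (Fin n)) = univ := by
  ext x; simp [mem_restOf]

lemma restOf_cons_subset (a : Fin n) (t : List (Fin n)) :
    restOf G (a :: t) ⊆ restOf G t := by
  intro x hx
  rw [mem_restOf] at hx ⊢
  intro v hv
  exact hx v (List.mem_cons_of_mem a hv)

/-- The invariant of the Gyárfás-style construction. -/
def InvP (G : SimpleGraph (Fin n)) (a : Fin n) (t : List (Fin n)) (C : Finset (Fin n)) : Prop :=
  IndList G (a :: t) ∧ (∃ u ∈ restOf G t, C = compIn G (restOf G t) u) ∧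
    (∃ x ∈ C, G.Adj a x) ∧ n < 2 * C.card

lemma invP_step {a : Fin n} {t : List (Fin n)} {C : Finset (Fin n)}
    (hInv : InvP G a t C)
    (hbig : ∃ u ∈ restOf G (a :: t), n < 2 * (compIn G (restOf G (a :: t)) u).card) :
    ∃ z D, InvP G z (a :: t) D := by
  obtain ⟨hIP, ⟨u₀, hu₀R, hCeq⟩, ⟨x, hxC, hax⟩, hCbig⟩ := hInv
  obtain ⟨u, huR, hDbig⟩ := hbig
  set Rt := restOf G t with hRt
  set Rl := restOf G (a :: t) with hRl
  have hRsub : Rl ⊆ Rt := restOf_cons_subset a t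
  set D := compIn G Rl u with hD
  have hDsubRl : D ⊆ Rl := compIn_subset huR
  have huRt : u ∈ Rt := hRsub huR
  have hDsubCu : D ⊆ compIn G Rt u := by
    intro w hw
    exact mem_compIn.2 (reachIn_mono hRsub (mem_compIn.1 hw))
  -- u ∈ C
  have huC : u ∈ C := by
    by_contra huC
    have hdisj : Disjoint (compIn G Rt u) C := by
      rw [Finset.disjoint_left]
      intro w hw hwC
      rw [hCeq] at hwC
      have h1 : compIn G Rt w = compIn G Rt u := compIn_eq_of_mem hw
      have h2 : compIn G Rt w = compIn G Rt u₀ := compIn_eq_of_mem hwC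
      apply huC
      rw [hCeq, ← h2, h1]
      exact mem_compIn_self
    have hcup : (compIn G Rt u ∪ C).card ≤ n := by
      calc (compIn G Rt u ∪ C).card ≤ (univ : Finset (Fin n)).card :=
            Finset.card_le_card (Finset.subset_univ _)
        _ = n := by rw [Finset.card_univ, Fintype.card_fin]
    rw [Finset.card_union_of_disjoint hdisj] at hcup
    have hcu : D.card ≤ (compIn G Rt u).card := Finset.card_le_card hDsubCu
    omega
  have hCu : compIn G Rt u = C := by rw [hCeq]; exact compIn_eq_of_mem (by rwa [← hCeq])
  have hDC : D ⊆ C := by rw [← hCu]; exact hDsubCu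
  -- x ∉ D
  have hxRl : x ∉ Rl := by
    intro hx
    rw [hRl, mem_restOf] at hx
    exact (hx a List.mem_cons_self).2 hax
  have hxD : x ∉ D := fun hx => hxRl (hDsubRl hx)
  -- reach from u to x within Rt
  have hux : reachIn G Rt u x := by
    have : x ∈ compIn G Rt u := by rw [hCu]; exact hxC
    exact mem_compIn.1 this
  obtain ⟨y, z, huy, hyz, hyD, hzD⟩ := reachIn_boundary hux mem_compIn_self hxD
  -- z ∈ C
  have hzC : z ∈ C := by
    rw [← hCu]
    exact mem_compIn.2 (Relation.ReflTransGen.tail huy hyz)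
  have hyRl : y ∈ Rl := hDsubRl hyD
  have hzRt : z ∈ Rt := hyz.2.2
  -- z ∉ Rl
  have hzRl : z ∉ Rl := by
    intro hz
    exact hzD (compIn_closed hyD hyz.1 hyRl hz)
  -- z ≠ a and Adj a z
  have hza : z ≠ a := by
    intro h
    subst h
    rw [hRl, mem_restOf] at hyRl
    exact (hyRl z List.mem_cons_self).2 (G.adj_symm hyz.1)
  have haz : G.Adj a z := by
    by_contra haz
    apply hzRl
    rw [hRl, mem_restOf]
    intro v hv
    rcases List.mem_cons.1 hv with rfl | hv
    · exact ⟨hza, haz⟩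
    · rw [hRt, mem_restOf] at hzRt
      exact hzRt v hv
  -- build the new path
  have hzt : ∀ v ∈ t, z ≠ v ∧ ¬ G.Adj v z := by
    rw [hRt, mem_restOf] at hzRt
    exact fun v hv => hzRt v hv
  have hIP' : IndList G (z :: a :: t) := by
    refine hIP.cons (G.adj_symm haz) ?_ ?_
    · intro hz
      rcases List.mem_cons.1 hz with rfl | hz
      · exact hza rfl
      · exact (hzt z hz).1 rfl
    · intro v hv
      intro hadj
      exact (hzt v hv).2 (G.adj_symm hadj)
  exact ⟨z, D, hIP', ⟨u, huR, rfl⟩, ⟨y, hyD, G.adj_symm hyz.1⟩, hDbig⟩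

lemma invP_base (hd : 0 < d)
    (hdeg : ∀ v : Fin n, (univ.filter (fun x => G.Adj v x)).card = d)
    (hbig : ∃ u ∈ (univ : Finset (Fin n)), n < 2 * (compIn G univ u).card) :
    ∃ a C, InvP G a [] C := by
  obtain ⟨u, _, hbig⟩ := hbig
  have hufilter : (univ.filter (fun x => G.Adj u x)).Nonempty := by
    rw [← Finset.card_pos, hdeg u]; exact hd
  obtain ⟨x, hx⟩ := hufilter
  have hux : G.Adj u x := (Finset.mem_filter.1 hx).2
  have hxC : x ∈ compIn G univ u :=
    compIn_closed mem_compIn_self hux (Finset.mem_univ u) (Finset.mem_univ x)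
  refine ⟨u, compIn G univ u, IndList.single u, ?_, ⟨x, hxC, hux⟩, ?_⟩
  · rw [restOf_nil]
    exact ⟨u, Finset.mem_univ u, rfl⟩
  · exact hbig

lemma main_exists (hd : 0 < d)
    (hdeg : ∀ v : Fin n, (univ.filter (fun x => G.Adj v x)).card = d)
    (K : ℕ) (hK : 1 ≤ K) :
    (∃ l : List (Fin n), IndList G l ∧ l.length = K) ∨
    (∃ l : List (Fin n), IndList G l ∧ l.length ≤ K ∧
      ∀ u ∈ restOf G l, 2 * (compIn G (restOf G l) u).card ≤ n) := by
  have H : ∀ j : ℕ, 1 ≤ j → j ≤ K →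
      (∃ a t C, InvP G a t C ∧ (a :: t).length = j) ∨
      (∃ l : List (Fin n), IndList G l ∧ l.length ≤ K ∧
        ∀ u ∈ restOf G l, 2 * (compIn G (restOf G l) u).card ≤ n) := by
    intro j
    induction j with
    | zero => omega
    | succ j ih =>
        intro _ hjK
        by_cases hj : j = 0
        · subst hj
          by_cases hbig : ∃ u ∈ (univ : Finset (Fin n)), n < 2 * (compIn G univ u).card
          · obtain ⟨a, C, hInv⟩ := invP_base hd hdeg hbig
            exact Or.inl ⟨a, [], C, hInv, rfl⟩
          · push_neg at hbig
            refine Or.inr ⟨[], IndList.nil, by simp, ?_⟩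
            rw [restOf_nil]
            intro u hu
            exact hbig u hu
        · have h1j : 1 ≤ j := Nat.pos_of_ne_zero hj
          rcases ih h1j (by omega) with ⟨a, t, C, hInv, hlen⟩ | hr
          · by_cases hbig : ∃ u ∈ restOf G (a :: t),
                n < 2 * (compIn G (restOf G (a :: t)) u).card
            · obtain ⟨z, D, hInv'⟩ := invP_step hInv hbig
              exact Or.inl ⟨z, a :: t, D, hInv', by simp at hlen ⊢; omega⟩
            · push_neg at hbig
              exact Or.inr ⟨a :: t, hInv.1, by omega, hbig⟩
          · exact Or.inr hr
  rcases H K hK (le_refl K) with ⟨a, t, C, hInv, hlen⟩ | hr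
  · exact Or.inl ⟨a :: t, hInv.1, hlen⟩
  · exact Or.inr hr


theorem comb_main (hd : 0 < d)
    (hdeg : ∀ v : Fin n, (univ.filter (fun x => G.Adj v x)).card = d)
    (hmix : ∀ A B : Finset (Fin n), (∀ a ∈ A, ∀ b ∈ B, ¬ G.Adj a b) →
      36 * (A.card * B.card) ≤ n ^ 2)
    (hdn : 100 * d ≤ n) (K : ℕ) (hK1 : 1 ≤ K) (hKd : 16 * (K * (d + 1)) ≤ n) :
    HasInducedPath G K := by
  have hn100 : 100 ≤ n := le_trans (by omega) hdn
  rcases main_exists hd hdeg K hK1 with ⟨l, hIL, hlen⟩ | ⟨l, hIL, hlen, hsmall⟩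
  · rw [← hlen]; exact hIL.hasInducedPath
  exfalso
  set R := restOf G l with hR
  have hRcard : n ≤ R.card + l.length * (d + 1) := card_restOf hdeg l
  have hllen : l.length * (d + 1) ≤ K * (d + 1) := Nat.mul_le_mul_right _ hlen
  have hR15 : 15 * n ≤ 16 * R.card := by omega
  have hq : n ^ 2 = n * n := by ring
  by_cases hcase : ∃ u ∈ R, n ≤ 4 * (compIn G R u).card
  · -- one big (≥ n/4) component: it and its complement both large
    obtain ⟨u, huR, hu4⟩ := hcase
    set A := compIn G R u with hA
    have hAsub : A ⊆ R := compIn_subset huR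
    set B := R \ A with hB
    have hnonadj : ∀ a ∈ A, ∀ b ∈ B, ¬ G.Adj a b := by
      intro a haA b hbB hadj
      have hbR : b ∈ R := (Finset.mem_sdiff.1 hbB).1
      have : b ∈ A := compIn_closed haA hadj (hAsub haA) hbR
      exact (Finset.mem_sdiff.1 hbB).2 this
    have h36 := hmix A B hnonadj
    have hA2 : 2 * A.card ≤ n := hsmall u huR
    have hBcard : B.card = R.card - A.card := Finset.card_sdiff_of_subset hAsub
    have hB16 : 7 * n ≤ 16 * B.card := by omega
    have hP1 : n * (7 * n) ≤ (4 * A.card) * (16 * B.card) := Nat.mul_le_mul hu4 hB16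
    have hApos : 1 ≤ A.card := Finset.card_pos.2 ⟨u, mem_compIn_self⟩
    have hBpos : 1 ≤ B.card := by omega
    have hPpos : 1 ≤ A.card * B.card := Nat.one_le_iff_ne_zero.2 (by positivity)
    have hP2 : (4 * A.card) * (16 * B.card) = 64 * (A.card * B.card) := by ring
    rw [hP2] at hP1
    rw [hq] at h36
    have hnn : n * (7 * n) = 7 * (n * n) := by ring
    rw [hnn] at hP1
    omega
  · -- all components < n/4 : greedy split
    push_neg at hcase
    have hc4 : 4 * (n / 4) ≤ n := by omega
    have hcomp : ∀ u ∈ R, (compIn G R u).card ≤ n / 4 := by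
      intro u hu
      have := hcase u hu
      omega
    have hc1 : 1 ≤ n / 4 := by omega
    set m := R.card / 2 with hm
    obtain ⟨A, hAsub, hAclosed, hAlo, hAhi⟩ :=
      split_lemma R.card R (le_refl _) (n / 4) m hc1 hcomp (Nat.div_le_self _ _)
    set B := R \ A with hB
    have hnonadj : ∀ a ∈ A, ∀ b ∈ B, ¬ G.Adj a b := by
      intro a haA b hbB hadj
      have haR : a ∈ R := hAsub haA
      have hbR : b ∈ R := (Finset.mem_sdiff.1 hbB).1
      have hreach : b ∈ compIn G R a :=
        compIn_closed mem_compIn_self hadj haR hbR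
      exact (Finset.mem_sdiff.1 hbB).2 (hAclosed a haA hreach)
    have h36 := hmix A B hnonadj
    have hBcard : B.card = R.card - A.card := Finset.card_sdiff_of_subset hAsub
    -- 32 A ≥ 14 n, 32 B ≥ 7 n
    have hA32 : 14 * n ≤ 32 * A.card := by omega
    have hB32 : 7 * n ≤ 32 * B.card := by omega
    have hP1 : (14 * n) * (7 * n) ≤ (32 * A.card) * (32 * B.card) :=
      Nat.mul_le_mul hA32 hB32
    have hP2 : (32 * A.card) * (32 * B.card) = 1024 * (A.card * B.card) := by ring
    have hP3 : (14 * n) * (7 * n) = 98 * (n * n) := by ring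
    rw [hP2, hP3] at hP1
    rw [hq] at h36
    have hApos : 1 ≤ A.card := by omega
    have hBpos : 1 ≤ B.card := by omega
    have hPpos : 1 ≤ A.card * B.card := Nat.one_le_iff_ne_zero.2 (by positivity)
    omega
  
end Comb

/-- There exist constants `δ₁, δ₃ > 0` such that every `(n,d,λ)`-graph `G`
with `d ≤ δ₃ n` and `λ/d ≤ δ₁` contains an induced path on at least `n/(48 d)` vertices. -/
theorem long_induced_path_in_ndl_graph :
    ∃ δ₁ > (0 : ℝ), ∃ δ₃ > (0 : ℝ),
      ∀ (n d : ℕ), 0 < n → 0 < d →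
        ∀ (lam : ℝ) (G : SimpleGraph (Fin n)),
          IsNDLGraph n d lam G → (d : ℝ) ≤ δ₃ * n → lam / d ≤ δ₁ →
            ∃ k : ℕ, (n : ℝ) / (48 * d) ≤ (k : ℝ) ∧ HasInducedPath G k := by
  refine ⟨1/6, by norm_num, 1/100, by norm_num, ?_⟩
  intro n d hn hd lam G hNDL hd3 hlam1
  letI : DecidableRel G.Adj := Classical.decRel G.Adj
  obtain ⟨hreg, i₀, h₀, hoth⟩ := hNDL
  have hdR : (0:ℝ) < d := by exact_mod_cast hd
  have hnR : (0:ℝ) < n := by exact_mod_cast hn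
  -- numeric consequences
  have hdn : 100 * d ≤ n := by
    have h : (100:ℝ) * d ≤ n := by linarith
    exact_mod_cast h
  have hn100 : 100 ≤ n := by omega
  have hn2 : 2 ≤ n := by omega
  have hlam6 : lam ≤ (d:ℝ)/6 := by
    have := (div_le_iff₀ hdR).1 hlam1
    linarith
  -- degrees
  have hdeg : ∀ v : Fin n, (univ.filter (fun x => G.Adj v x)).card = d := by
    intro v
    have h1 := hreg v
    rw [← h1]
    rw [SimpleGraph.degree, SimpleGraph.neighborFinset_eq_filter]
  -- mixing
  have hmix : ∀ A B : Finset (Fin n), (∀ a ∈ A, ∀ b ∈ B, ¬ G.Adj a b) →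
      36 * (A.card * B.card) ≤ n ^ 2 := by
    intro A B hAB
    exact key_mixing_bound G.adjHermitian i₀ h₀ hoth hreg hd hn2 hlam6 A B hAB
  -- the target length
  set K := ⌈(n:ℝ) / (48 * d)⌉₊ with hK
  have hK1 : 1 ≤ K := by
    rw [hK]
    rw [Nat.one_le_iff_ne_zero]
    intro h0
    have := Nat.ceil_pos.2 (by positivity : (0:ℝ) < (n:ℝ)/(48*d))
    omega
  have hKd : 16 * (K * (d + 1)) ≤ n := by
    have hceil : (K:ℝ) < (n:ℝ)/(48*d) + 1 := by
      rw [hK]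
      exact Nat.ceil_lt_add_one (by positivity)
    have h48 : (K:ℝ) * (48*d) < n + 48*d := by
      have := mul_lt_mul_of_pos_right hceil (by positivity : (0:ℝ) < 48*d)
      rwa [add_mul, div_mul_cancel₀ _ (by positivity : (48:ℝ)*d ≠ 0), one_mul] at this
    have hK0 : (0:ℝ) ≤ K := by positivity
    have hd1R : (0:ℝ) ≤ (d:ℝ) - 1 := by
      have : (1:ℝ) ≤ d := by exact_mod_cast hd
      linarith
    have hdnR : 100 * (d:ℝ) ≤ n := by exact_mod_cast hdn
    have hhint : 0 ≤ (K:ℝ) * ((d:ℝ) - 1) := mul_nonneg hK0 hd1R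
    have hgoal : (16:ℝ) * (K * (d+1)) ≤ n := by nlinarith [h48, hhint, hdnR]
    exact_mod_cast hgoal
  refine ⟨K, Nat.le_ceil _, ?_⟩
  exact comb_main hd hdeg hmix hdn K hK1 hKd
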